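/- arXiv:2103.12967 — 3 statements merged into one kernel-verified Lean document; each statement's English description precedes it below -/
import Mathlib

section
/- The function g(p) = tan((1/2 − p)π) satisfies (π·g(p) − 1/p)/(1/p) = O(p²) as p → 0⁺; more precisely, |π·tan((1/2 − p)π) − 1/p| ≤ C·p for all sufficiently small p > 0 and some constant C, so that the relative difference between π·g(p) and the harmonic-mean transform 1/p is O(p²). -/
open Filter Set

private lemma sin_sub_mul_cos_le (x : ℝ) (hx : 0 ≤ x) :
    Real.sin x - x * Real.cos x ≤ x ^ 3 / 3 := by
  have key : MonotoneOn (fun t : ℝ => t ^ 3 / 3 - (Real.sin t - t * Real.cos t)) (Ici 0) := by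
    have hd : ∀ t : ℝ, HasDerivAt (fun t : ℝ => t ^ 3 / 3 - (Real.sin t - t * Real.cos t))
        (t ^ 2 - t * Real.sin t) t := by
      intro t
      have h1 : HasDerivAt (fun t : ℝ => t ^ 3 / 3) (3 * t ^ 2 / 3) t :=
        (hasDerivAt_pow 3 t).div_const 3
      have h2 : HasDerivAt (fun t : ℝ => t * Real.cos t)
          (1 * Real.cos t + t * (-Real.sin t)) t :=
        (hasDerivAt_id t).mul (Real.hasDerivAt_cos t)
      have := h1.sub ((Real.hasDerivAt_sin t).sub h2)
      exact this.congr_deriv (by ring)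
    apply monotoneOn_of_deriv_nonneg (convex_Ici 0)
    · exact fun t _ => ((hd t).continuousAt).continuousWithinAt
    · exact fun t _ => ((hd t).differentiableAt).differentiableWithinAt
    · intro t ht
      rw [interior_Ici] at ht
      rw [(hd t).deriv]
      have h0 : (0:ℝ) ≤ t := le_of_lt ht
      have : Real.sin t ≤ t := Real.sin_le h0
      nlinarith
  have h0 : (0:ℝ) ∈ Ici (0:ℝ) := mem_Ici.mpr (le_refl 0)
  have := key h0 (mem_Ici.mpr hx) hx
  simp at this
  linarith

private lemma mul_cos_le_sin (x : ℝ) (hx : 0 ≤ x) (hx1 : x ≤ 1) :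
    x * Real.cos x ≤ Real.sin x := by
  have key : MonotoneOn (fun t : ℝ => Real.sin t - t * Real.cos t) (Icc 0 1) := by
    have hd : ∀ t : ℝ, HasDerivAt (fun t : ℝ => Real.sin t - t * Real.cos t)
        (t * Real.sin t) t := by
      intro t
      have h2 : HasDerivAt (fun t : ℝ => t * Real.cos t)
          (1 * Real.cos t + t * (-Real.sin t)) t :=
        (hasDerivAt_id t).mul (Real.hasDerivAt_cos t)
      have := (Real.hasDerivAt_sin t).sub h2
      exact this.congr_deriv (by ring)
    apply monotoneOn_of_deriv_nonneg (convex_Icc 0 1)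
    · exact fun t _ => ((hd t).continuousAt).continuousWithinAt
    · exact fun t _ => ((hd t).differentiableAt).differentiableWithinAt
    · intro t ht
      rw [interior_Icc] at ht
      rw [(hd t).deriv]
      have hs : 0 ≤ Real.sin t := Real.sin_nonneg_of_nonneg_of_le_pi ht.1.le
        (ht.2.le.trans (by linarith [Real.pi_gt_three]))
      exact mul_nonneg ht.1.le hs
  have h0 : (0:ℝ) ∈ Icc (0:ℝ) 1 := by constructor <;> norm_num
  have hxm : x ∈ Icc (0:ℝ) 1 := ⟨hx, hx1⟩
  have := key h0 hxm hx
  simp at this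
  linarith

theorem cauchy_harmonic_equiv :
    ∃ C > 0, ∀ᶠ p in nhdsWithin 0 (Ioi (0 : ℝ)),
      |Real.pi * Real.tan ((1 / 2 - p) * Real.pi) - 1 / p| ≤ C * p := by
  refine ⟨Real.pi ^ 2, by positivity, ?_⟩
  filter_upwards [Ioo_mem_nhdsGT_of_mem (by norm_num : (0:ℝ) ∈ Ico (0:ℝ) (1/4))]
    with p hp
  obtain ⟨hp0, hp4⟩ := hp
  set x := p * Real.pi with hxdef
  have hπ := Real.pi_pos
  have hπ4 := Real.pi_lt_d2
  have hx0 : 0 < x := by positivity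
  have hx1 : x < 1 := by
    calc x < (1/4) * 3.15 := by apply mul_lt_mul' (le_of_lt hp4) hπ4 hπ.le (by norm_num)
    _ < 1 := by norm_num
  have hsin : 0 < Real.sin x := Real.sin_pos_of_pos_of_lt_pi hx0
    (hx1.trans (by linarith [Real.pi_gt_three]))
  have hcos : 0 < Real.cos x := Real.cos_pos_of_mem_Ioo
    ⟨by linarith [Real.pi_gt_three], by nlinarith [Real.pi_gt_three]⟩
  -- rewrite tan
  have htan : Real.tan ((1 / 2 - p) * Real.pi) = Real.cos x / Real.sin x := by
    have : (1 / 2 - p) * Real.pi = Real.pi / 2 - x := by rw [hxdef]; ring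
    rw [this, Real.tan_pi_div_two_sub, Real.tan_eq_sin_div_cos, inv_div]
  rw [htan]
  have hkey : Real.pi * (Real.cos x / Real.sin x) - 1 / p
      = (x * Real.cos x - Real.sin x) / (p * Real.sin x) := by
    field_simp
    ring
  rw [hkey, abs_div, abs_of_pos (by positivity : (0:ℝ) < p * Real.sin x),
    div_le_iff₀ (by positivity : (0:ℝ) < p * Real.sin x)]
  have hub : |x * Real.cos x - Real.sin x| ≤ x ^ 3 / 3 := by
    rw [abs_sub_comm, abs_of_nonneg (by linarith [mul_cos_le_sin x hx0.le hx1.le])]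
    linarith [sin_sub_mul_cos_le x hx0.le]
  have hsin_lb : 3 * x / 4 ≤ Real.sin x := by
    have h := Real.sin_gt_sub_cube hx0
    have hc : x ^ 3 ≤ x := by nlinarith [mul_pos (mul_pos hx0 (sub_pos.mpr hx1)) (show (0:ℝ) < 1 + x by linarith)]
    linarith
  calc |x * Real.cos x - Real.sin x| ≤ x ^ 3 / 3 := hub
    _ ≤ Real.pi ^ 2 * p * (p * Real.sin x) := by
        have h1 : x ^ 3 / 3 ≤ x ^ 2 * (3 * x / 4) := by nlinarith
        have h2 : x ^ 2 * (3 * x / 4) ≤ x ^ 2 * Real.sin x := by nlinarith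
        have h3 : x ^ 2 * Real.sin x = Real.pi ^ 2 * p * (p * Real.sin x) := by
          rw [hxdef]; ring
        linarith
end

section
/- Let X₁,…,Xₙ be i.i.d. standard Cauchy, δ ∈ (0,1), ν_δ = tan(π(δ − 1/2)), Yᵢ = max(Xᵢ, ν_δ), and let m = #{i : Xᵢ < ν_δ}. Then for t > 0 and 1 ≤ j ≤ n−1, P((1/n)∑ᵢYᵢ ≥ t, m = j) ≤ C(n,j)·δʲ·P(X₁ ≥ t), where C(n,j) is the binomial coefficient. -/
open MeasureTheory ProbabilityTheory Filter Set Finset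

section CauchyAux
open Real Topology


noncomputable def cpdf (γ x : ℝ) : ℝ := γ / (π * (γ^2 + x^2))

lemma cpdf_pos {γ : ℝ} (hγ : 0 < γ) (x : ℝ) : 0 < cpdf γ x := by
  apply div_pos hγ
  positivity

lemma denom_pos {γ : ℝ} (hγ : 0 < γ) (x : ℝ) : 0 < γ^2 + x^2 := by positivity

lemma cpdf_cont {γ : ℝ} (hγ : 0 < γ) : Continuous (cpdf γ) := by
  apply continuous_const.div (by continuity)
  intro x
  have := denom_pos hγ x
  positivity

lemma integrable_cpdf {γ : ℝ} (hγ : 0 < γ) : Integrable (cpdf γ) := by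
  have h1 : Integrable (fun y : ℝ => (1 + (y/γ)^2)⁻¹) :=
    integrable_inv_one_add_sq.comp_div hγ.ne'
  have h2 : Integrable (fun y : ℝ => (γ / π) * ((γ^2 * (1 + (y/γ)^2))⁻¹)) := by
    simpa [mul_comm, mul_assoc, mul_left_comm] using (h1.const_mul ((γ/π) * (γ^2)⁻¹))
  apply h2.congr
  filter_upwards with y
  have hne : γ ≠ 0 := hγ.ne'
  simp only [cpdf]
  field_simp

lemma hasDerivAt_cpdf_anti {γ : ℝ} (hγ : 0 < γ) (x : ℝ) :
    HasDerivAt (fun x => arctan (x/γ) / π) (cpdf γ x) x := by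
  have h1 : HasDerivAt (fun x : ℝ => x / γ) (1/γ) x := (hasDerivAt_id x).div_const γ
  have h2 := (Real.hasDerivAt_arctan (x/γ)).comp x h1
  have h3 := h2.div_const π
  refine h3.congr_deriv ?_
  have hne : γ ≠ 0 := hγ.ne'
  have hπ := Real.pi_ne_zero
  simp only [cpdf]
  field_simp

lemma integral_Ioi_cpdf {γ : ℝ} (hγ : 0 < γ) (s : ℝ) :
    ∫ x in Ioi s, cpdf γ x = 1/2 - arctan (s/γ) / π := by
  have := integral_Ioi_of_hasDerivAt_of_tendsto' (f := fun x => arctan (x/γ) / π)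
    (a := s) (m := 1/2) (fun x _ => hasDerivAt_cpdf_anti hγ x) (integrable_cpdf hγ).integrableOn ?_
  · rw [this]
  · have : Tendsto (fun x : ℝ => x / γ) atTop atTop := tendsto_id.atTop_div_const hγ
    have h := ((tendsto_nhds_of_tendsto_nhdsWithin tendsto_arctan_atTop).comp this).div_const π
    convert h using 2
    · rfl
    · field_simp

lemma integral_Iic_cpdf {γ : ℝ} (hγ : 0 < γ) (s : ℝ) :
    ∫ x in Iic s, cpdf γ x = 1/2 + arctan (s/γ) / π := by
  have := integral_Iic_of_hasDerivAt_of_tendsto' (f := fun x => arctan (x/γ) / π)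
    (a := s) (m := -(1/2)) (fun x _ => hasDerivAt_cpdf_anti hγ x) (integrable_cpdf hγ).integrableOn ?_
  · rw [this]; ring
  · have : Tendsto (fun x : ℝ => x / γ) atBot atBot := tendsto_id.atBot_div_const hγ
    have h := ((tendsto_nhds_of_tendsto_nhdsWithin tendsto_arctan_atBot).comp this).div_const π
    convert h using 2
    · rfl
    · field_simp

section Conv
variable {a b x : ℝ}

lemma hasDerivAt_logsq (c : ℝ) (hc : 0 < c) (d y : ℝ) :
    HasDerivAt (fun y => Real.log (c^2 + (y-d)^2)) (2*(y-d)/(c^2+(y-d)^2)) y := by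
  have hpos : (0:ℝ) < c^2 + (y-d)^2 := by positivity
  have h1 : HasDerivAt (fun y : ℝ => c^2 + (y-d)^2) (2*(y-d)) y := by
    have := (((hasDerivAt_id y).sub_const d).pow 2).const_add (c^2)
    simpa using this
  have := (Real.hasDerivAt_log hpos.ne').comp y h1
  refine this.congr_deriv ?_
  field_simp

lemma hasDerivAt_arctansc (c : ℝ) (hc : 0 < c) (d y : ℝ) :
    HasDerivAt (fun y => arctan ((y-d)/c)) (1/(1+((y-d)/c)^2) * (1/c)) y := by
  have h1 : HasDerivAt (fun y : ℝ => (y-d)/c) (1/c) y := by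
    simpa using ((hasDerivAt_id y).sub_const d).div_const c
  exact (Real.hasDerivAt_arctan ((y-d)/c)).comp y h1

lemma integrable_conv_cpdf (ha : 0 < a) (hb : 0 < b) (x : ℝ) : Integrable (fun y => cpdf a y * cpdf b (x - y)) := by
  have hbnd : ∀ y : ℝ, ‖cpdf a y * cpdf b (x - y)‖ ≤ (1/(π*b)) * cpdf a y := by
    intro y
    have hπ := Real.pi_pos
    have h1 : 0 < cpdf a y := by
      apply div_pos ha; positivity
    have h2 : 0 ≤ cpdf b (x - y) := by
      apply le_of_lt; apply div_pos hb; positivity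
    rw [Real.norm_eq_abs, abs_of_nonneg (by positivity)]
    rw [mul_comm ((1:ℝ)/(π*b))]
    apply mul_le_mul_of_nonneg_left _ h1.le
    rw [cpdf, div_le_div_iff₀ (by positivity) (by positivity)]
    have : b^2 ≤ b^2 + (x-y)^2 := by nlinarith [sq_nonneg (x-y)]
    nlinarith
  refine Integrable.mono' ?_ ?_ (Filter.Eventually.of_forall hbnd)
  · exact Integrable.const_mul (by
      have h1 : Integrable (fun y : ℝ => (1 + (y/a)^2)⁻¹) :=
        integrable_inv_one_add_sq.comp_div ha.ne'
      have h2 : Integrable (fun y : ℝ => (a / π) * ((a^2 * (1 + (y/a)^2))⁻¹)) := by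
        simpa [mul_comm, mul_assoc, mul_left_comm] using (h1.const_mul ((a/π) * (a^2)⁻¹))
      apply h2.congr
      filter_upwards with y
      have hne : a ≠ 0 := ha.ne'
      simp only [cpdf]
      field_simp) (1/(π*b))
  · apply Continuous.aestronglyMeasurable
    apply Continuous.mul
    · exact continuous_const.div (by continuity) (fun y => by have := ha; positivity)
    · apply Continuous.div continuous_const (by continuity) (fun y => by have := hb; positivity)

lemma tendsto_logratio (ha : 0 < a) (hb : 0 < b) (d : ℝ) {l : Filter ℝ}
    (hinv : Tendsto (fun y : ℝ => y⁻¹) l (𝓝 0)) (hne : ∀ᶠ y in l, y ≠ 0) :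
    Tendsto (fun y => Real.log (a^2 + y^2) - Real.log (b^2 + (y-d)^2)) l (𝓝 0) := by
  have hnum : Tendsto (fun y : ℝ => (a*y⁻¹)^2 + 1) l (𝓝 1) := by
    have : Tendsto (fun y : ℝ => (a*y⁻¹)^2) l (𝓝 0) := by
      have h := (hinv.const_mul a).pow 2
      simpa using h
    simpa using this.add tendsto_const_nhds
  have hden : Tendsto (fun y : ℝ => (b*y⁻¹)^2 + (1 - d*y⁻¹)^2) l (𝓝 1) := by
    have h1 : Tendsto (fun y : ℝ => (b*y⁻¹)^2) l (𝓝 0) := by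
      have h := (hinv.const_mul b).pow 2
      simpa using h
    have h2 : Tendsto (fun y : ℝ => (1 - d*y⁻¹)^2) l (𝓝 1) := by
      have h := ((tendsto_const_nhds (x := (1:ℝ))).sub (hinv.const_mul d)).pow 2
      simpa using h
    simpa using h1.add h2
  have hr : Tendsto (fun y : ℝ => ((a*y⁻¹)^2 + 1)/((b*y⁻¹)^2 + (1 - d*y⁻¹)^2)) l (𝓝 1) := by
    have := hnum.div hden one_ne_zero
    rw [div_one] at this; exact this
  have heq : ∀ᶠ y in l, ((a*y⁻¹)^2 + 1)/((b*y⁻¹)^2 + (1 - d*y⁻¹)^2)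
      = (a^2 + y^2)/(b^2 + (y-d)^2) := by
    filter_upwards [hne] with y hy
    have h1 : b^2 + (y-d)^2 ≠ 0 := by positivity
    field_simp
    all_goals ring
  have hr2 : Tendsto (fun y : ℝ => (a^2 + y^2)/(b^2 + (y-d)^2)) l (𝓝 1) := hr.congr' heq
  have hlog := ((Real.continuousAt_log one_ne_zero).tendsto.comp hr2)
  rw [Real.log_one] at hlog
  apply hlog.congr
  intro y
  have h1 : (0:ℝ) < a^2 + y^2 := by positivity
  have h2 : (0:ℝ) < b^2 + (y-d)^2 := by positivity
  simp only [Function.comp]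
  rw [Real.log_div h1.ne' h2.ne']

lemma conv_cpdf (ha : 0 < a) (hb : 0 < b) (hd : a ≠ b ∨ x ≠ 0) :
    ∫ y : ℝ, cpdf a y * cpdf b (x - y) = cpdf (a+b) x := by
  have hπ := Real.pi_pos
  have hab : (0:ℝ) < a + b := by linarith
  have hK1 : (0:ℝ) < (a+b)^2 + x^2 := by positivity
  have hK2 : (0:ℝ) < (a-b)^2 + x^2 := by
    rcases hd with h | h
    · have : a - b ≠ 0 := sub_ne_zero.mpr h
      positivity
    · positivity
  set E : ℝ := b^2 + x^2 - a^2 with hE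
  set E' : ℝ := a^2 + x^2 - b^2 with hE'
  set K : ℝ := ((a+b)^2 + x^2) * ((a-b)^2 + x^2) with hKdef
  have hK : (0:ℝ) < K := mul_pos hK1 hK2
  set F : ℝ → ℝ := fun y => (a*b/π^2) *
    ( (x/K) * Real.log (a^2 + y^2) + (E/(a*K)) * arctan (y/a)
      - (x/K) * Real.log (b^2 + (y-x)^2) + (E'/(b*K)) * arctan ((y-x)/b) ) with hFdef
  have hF : ∀ y, HasDerivAt F (cpdf a y * cpdf b (x - y)) y := by
    intro y
    have h1 : HasDerivAt (fun y => Real.log (a^2 + y^2)) (2*y/(a^2+y^2)) y := by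
      have := hasDerivAt_logsq a ha 0 y
      simpa using this
    have h2 : HasDerivAt (fun y => arctan (y/a)) (1/(1+(y/a)^2) * (1/a)) y := by
      have := hasDerivAt_arctansc a ha 0 y
      simpa using this
    have h3 : HasDerivAt (fun y => Real.log (b^2 + (y-x)^2)) (2*(y-x)/(b^2+(y-x)^2)) y :=
      hasDerivAt_logsq b hb x y
    have h4 : HasDerivAt (fun y => arctan ((y-x)/b)) (1/(1+((y-x)/b)^2) * (1/b)) y :=
      hasDerivAt_arctansc b hb x y
    have hcomb := ((((h1.const_mul (x/K)).add (h2.const_mul (E/(a*K)))).sub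
      (h3.const_mul (x/K))).add (h4.const_mul (E'/(b*K)))).const_mul (a*b/π^2)
    refine hcomb.congr_deriv ?_
    have hQ : (0:ℝ) < a^2 + y^2 := by positivity
    have hP : (0:ℝ) < b^2 + (y-x)^2 := by positivity
    have hP' : (0:ℝ) < b^2 + (x-y)^2 := by positivity
    rw [hE, hE', hKdef]
    rw [cpdf, cpdf]
    field_simp
    ring
  set M : ℝ := (a*b/π^2) * ((E/(a*K)) * (π/2) + (E'/(b*K)) * (π/2)) with hM
  have htop : Tendsto F atTop (𝓝 M) := by
    have hL := tendsto_logratio ha hb x tendsto_inv_atTop_zero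
      (eventually_ne_atTop 0)
    have ha1 : Tendsto (fun y : ℝ => arctan (y/a)) atTop (𝓝 (π/2)) := by
      have h : Tendsto (fun y : ℝ => y/a) atTop atTop := tendsto_id.atTop_div_const ha
      exact (tendsto_nhds_of_tendsto_nhdsWithin tendsto_arctan_atTop).comp h
    have ha2 : Tendsto (fun y : ℝ => arctan ((y-x)/b)) atTop (𝓝 (π/2)) := by
      have h : Tendsto (fun y : ℝ => (y-x)/b) atTop atTop := by
        apply Tendsto.atTop_div_const hb
        exact tendsto_atTop_add_const_right _ (-x) tendsto_id |>.congr
          (fun y => by simp only [id_eq]; ring)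
      exact (tendsto_nhds_of_tendsto_nhdsWithin tendsto_arctan_atTop).comp h
    have hcomb := (((hL.const_mul (x/K)).add (ha1.const_mul (E/(a*K)))).add
      (ha2.const_mul (E'/(b*K)))).const_mul (a*b/π^2)
    simp only [mul_zero, zero_add] at hcomb
    have : (a*b/π^2) * ((E/(a*K)) * (π/2) + (E'/(b*K)) * (π/2))
        = a*b/π^2 * (x/K * 0 + (E/(a*K) * (π/2) + E'/(b*K) * (π/2))) := by ring
    rw [hM]
    apply hcomb.congr
    intro y
    rw [hFdef]
    ring
  have hbot : Tendsto F atBot (𝓝 (-M)) := by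
    have hinvbot : Tendsto (fun y : ℝ => y⁻¹) atBot (𝓝 (0:ℝ)) := by
      have h := ((tendsto_neg_atBot_atTop : Tendsto (fun y : ℝ => -y) atBot atTop)).inv_tendsto_atTop
      have h2 := h.neg
      simp only [neg_zero] at h2
      exact h2.congr (fun y => by simp [Pi.inv_apply, inv_neg])
    have hL := tendsto_logratio ha hb x hinvbot (eventually_ne_atBot 0)
    have ha1 : Tendsto (fun y : ℝ => arctan (y/a)) atBot (𝓝 (-(π/2))) := by
      have h : Tendsto (fun y : ℝ => y/a) atBot atBot := tendsto_id.atBot_div_const ha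
      exact (tendsto_nhds_of_tendsto_nhdsWithin tendsto_arctan_atBot).comp h
    have ha2 : Tendsto (fun y : ℝ => arctan ((y-x)/b)) atBot (𝓝 (-(π/2))) := by
      have h : Tendsto (fun y : ℝ => (y-x)/b) atBot atBot := by
        apply Tendsto.atBot_div_const hb
        exact tendsto_atBot_add_const_right _ (-x) tendsto_id |>.congr
          (fun y => by simp only [id_eq]; ring)
      exact (tendsto_nhds_of_tendsto_nhdsWithin tendsto_arctan_atBot).comp h
    have hcomb := (((hL.const_mul (x/K)).add (ha1.const_mul (E/(a*K)))).add
      (ha2.const_mul (E'/(b*K)))).const_mul (a*b/π^2)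
    have heqlim : (a*b/π^2) * ((x/K) * 0 + (E/(a*K)) * (-(π/2)) + (E'/(b*K)) * (-(π/2))) = -M := by
      rw [hM]; ring
    rw [← heqlim]
    apply hcomb.congr
    intro y
    rw [hFdef]
    ring
  have hint := integrable_conv_cpdf ha hb x
  have := integral_of_hasDerivAt_of_tendsto hF hint hbot htop
  rw [this]
  rw [hM, cpdf, hE, hE', hKdef]
  field_simp
  ring

end Conv

noncomputable def cM (γ : ℝ) : Measure ℝ :=
  volume.withDensity (fun x => ENNReal.ofReal (cpdf γ x))

lemma cM_apply {γ : ℝ} (hγ : 0 < γ) {s : Set ℝ} (hs : MeasurableSet s) :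
    cM γ s = ENNReal.ofReal (∫ x in s, cpdf γ x) := by
  rw [cM, withDensity_apply _ hs]
  rw [ofReal_integral_eq_lintegral_ofReal ((integrable_cpdf hγ).integrableOn)
    (Filter.Eventually.of_forall (fun x => (cpdf_pos hγ x).le))]

lemma cM_Ici {γ : ℝ} (hγ : 0 < γ) (s : ℝ) :
    cM γ (Ici s) = ENNReal.ofReal (1/2 - arctan (s/γ) / π) := by
  rw [cM_apply hγ measurableSet_Ici, integral_Ici_eq_integral_Ioi, integral_Ioi_cpdf hγ]

lemma cM_Iic {γ : ℝ} (hγ : 0 < γ) (s : ℝ) :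
    cM γ (Iic s) = ENNReal.ofReal (1/2 + arctan (s/γ) / π) := by
  rw [cM_apply hγ measurableSet_Iic, integral_Iic_cpdf hγ]

lemma cM_isProb {γ : ℝ} (hγ : 0 < γ) : IsProbabilityMeasure (cM γ) := by
  constructor
  rw [cM_apply hγ MeasurableSet.univ]
  have h : ∫ x in (univ : Set ℝ), cpdf γ x = ∫ x, cpdf γ x := by
    rw [setIntegral_univ]
  rw [h]
  have := integral_of_hasDerivAt_of_tendsto (f := fun x => arctan (x/γ) / π)
    (hasDerivAt_cpdf_anti hγ) (integrable_cpdf hγ) (m := -(1/2)) (n := 1/2) ?_ ?_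
  · rw [this]; norm_num
  · have h2 : Tendsto (fun x : ℝ => x / γ) atBot atBot := tendsto_id.atBot_div_const hγ
    have h3 := ((tendsto_nhds_of_tendsto_nhdsWithin tendsto_arctan_atBot).comp h2).div_const π
    convert h3 using 2
    · rfl
    · field_simp
  · have h2 : Tendsto (fun x : ℝ => x / γ) atTop atTop := tendsto_id.atTop_div_const hγ
    have h3 := ((tendsto_nhds_of_tendsto_nhdsWithin tendsto_arctan_atTop).comp h2).div_const π
    convert h3 using 2
    · rfl
    · field_simp

lemma cM_conv {a b : ℝ} (ha : 0 < a) (hb : 0 < b) :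
    Measure.map (fun p : ℝ × ℝ => p.1 + p.2) ((cM a).prod (cM b)) = cM (a+b) := by
  haveI := cM_isProb ha
  haveI := cM_isProb hb
  ext A hA
  rw [Measure.map_apply (f := fun p : ℝ × ℝ => p.1 + p.2) (measurable_fst.add measurable_snd) hA]
  have hA' : MeasurableSet ((fun p : ℝ × ℝ => p.1 + p.2) ⁻¹' A) :=
    (measurable_fst.add measurable_snd) hA
  rw [Measure.prod_apply hA']
  have h1 : ∀ y : ℝ, cM b (Prod.mk y ⁻¹' ((fun p : ℝ × ℝ => p.1 + p.2) ⁻¹' A))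
      = ∫⁻ u, Set.indicator A (fun u => ENNReal.ofReal (cpdf b (u - y))) u := by
    intro y
    have hset : (Prod.mk y ⁻¹' ((fun p : ℝ × ℝ => p.1 + p.2) ⁻¹' A)) = (fun z => y + z) ⁻¹' A :=
      rfl
    rw [hset, cM, withDensity_apply _ ((measurable_const_add y) hA),
      ← lintegral_indicator ((measurable_const_add y) hA)]
    rw [← lintegral_add_left_eq_self
      (fun u => Set.indicator A (fun u => ENNReal.ofReal (cpdf b (u - y))) u) y]
    congr 1
    ext z
    by_cases hz : y + z ∈ A
    · simp only [Set.indicator_of_mem hz, Set.indicator_of_mem (show z ∈ (fun z => y + z) ⁻¹' A from hz)]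
      congr 1
      ring_nf
    · simp only [Set.indicator_of_notMem hz,
        Set.indicator_of_notMem (show z ∉ (fun z => y + z) ⁻¹' A from hz)]
  have hmeas_in : Measurable (fun p : ℝ × ℝ =>
      Set.indicator A (fun u => ENNReal.ofReal (cpdf a p.1 * cpdf b (u - p.1))) p.2) := by
    have heq : (fun p : ℝ × ℝ =>
        Set.indicator A (fun u => ENNReal.ofReal (cpdf a p.1 * cpdf b (u - p.1))) p.2)
        = Set.indicator {p : ℝ × ℝ | p.2 ∈ A}
          (fun p => ENNReal.ofReal (cpdf a p.1 * cpdf b (p.2 - p.1))) := by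
      ext p
      by_cases hp : p.2 ∈ A
      · simp [Set.indicator_of_mem hp, Set.indicator_of_mem (show p ∈ {p : ℝ × ℝ | p.2 ∈ A} from hp)]
      · simp [Set.indicator_of_notMem hp,
          Set.indicator_of_notMem (show p ∉ {p : ℝ × ℝ | p.2 ∈ A} from hp)]
    rw [heq]
    apply Measurable.indicator
    · apply Measurable.ennreal_ofReal
      apply Measurable.mul
      · exact ((cpdf_cont ha).comp continuous_fst).measurable
      · exact ((cpdf_cont hb).comp (continuous_snd.sub continuous_fst)).measurable
    · exact measurable_snd hA
  calc ∫⁻ y, cM b (Prod.mk y ⁻¹' ((fun p : ℝ × ℝ => p.1 + p.2) ⁻¹' A)) ∂(cM a)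
      = ∫⁻ y, ENNReal.ofReal (cpdf a y) *
          (∫⁻ u, Set.indicator A (fun u => ENNReal.ofReal (cpdf b (u - y))) u) := by
        rw [cM, lintegral_withDensity_eq_lintegral_mul _
          ((cpdf_cont ha).measurable.ennreal_ofReal) ?_]
        · simp only [h1]; rfl
        · exact measurable_measure_prodMk_left hA'
    _ = ∫⁻ y, ∫⁻ u, Set.indicator A (fun u => ENNReal.ofReal (cpdf a y * cpdf b (u - y))) u := by
        congr 1
        ext y
        rw [← lintegral_const_mul _ (by
          apply Measurable.indicator
          · exact ((cpdf_cont hb).comp (continuous_id.sub continuous_const)).measurable.ennreal_ofReal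
          · exact hA)]
        congr 1
        ext u
        by_cases hu : u ∈ A
        · simp only [Set.indicator_of_mem hu]
          rw [ENNReal.ofReal_mul (cpdf_pos ha y).le]
        · simp only [Set.indicator_of_notMem hu, mul_zero]
    _ = ∫⁻ u, ∫⁻ y, Set.indicator A (fun u => ENNReal.ofReal (cpdf a y * cpdf b (u - y))) u := by
        exact lintegral_lintegral_swap hmeas_in.aemeasurable
    _ = ∫⁻ u, Set.indicator A (fun u => ENNReal.ofReal (cpdf (a+b) u)) u := by
        apply lintegral_congr_ae
        have h0 : ∀ᵐ u : ℝ, u ≠ (0:ℝ) := by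
          rw [ae_iff]
          simp only [ne_eq, not_not]
          have : {u : ℝ | u = 0} = {(0:ℝ)} := by ext u; simp
          rw [this, Real.volume_singleton]
        filter_upwards [h0] with u hu
        by_cases huA : u ∈ A
        · simp only [Set.indicator_of_mem huA]
          rw [← ofReal_integral_eq_lintegral_ofReal (integrable_conv_cpdf ha hb u)
            (Filter.Eventually.of_forall
              (fun y => mul_nonneg (cpdf_pos ha y).le (cpdf_pos hb _).le))]
          rw [conv_cpdf ha hb (Or.inr hu)]
        · simp only [Set.indicator_of_notMem huA]
          simp
    _ = cM (a+b) A := by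
        rw [cM, withDensity_apply _ hA, ← lintegral_indicator hA]

open ProbabilityTheory

lemma law_eq_cM {Ω : Type*} [MeasurableSpace Ω] (μ : Measure Ω) [IsProbabilityMeasure μ]
    (X : Ω → ℝ) (hX : Measurable X)
    (hc : ∀ t : ℝ, (μ {ω | X ω ≥ t}).toReal = 1 / 2 - arctan t / π) :
    Measure.map X μ = cM 1 := by
  haveI : IsProbabilityMeasure (Measure.map X μ) := Measure.isProbabilityMeasure_map hX.aemeasurable
  apply Measure.ext_of_Ici
  intro s
  rw [Measure.map_apply hX measurableSet_Ici, cM_Ici one_pos, div_one]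
  have h1 : X ⁻¹' Ici s = {ω | X ω ≥ s} := rfl
  rw [h1, ← ENNReal.ofReal_toReal (measure_ne_top μ _), hc s]

lemma law_sum_eq_cM {Ω : Type*} [MeasurableSpace Ω] (μ : Measure Ω) [IsProbabilityMeasure μ]
    {n : ℕ} (X : Fin n → Ω → ℝ) (hX : ∀ i, Measurable (X i))
    (hiid : iIndepFun X μ)
    (hc : ∀ i, ∀ t : ℝ, (μ {ω | X i ω ≥ t}).toReal = 1 / 2 - arctan t / π)
    (T : Finset (Fin n)) (hT : T.Nonempty) :
    Measure.map (fun ω => ∑ i ∈ T, X i ω) μ = cM (T.card) := by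
  induction hT using Finset.Nonempty.cons_induction with
  | singleton i =>
      simp only [Finset.sum_singleton, Finset.card_singleton, Nat.cast_one]
      exact law_eq_cM μ (X i) (hX i) (hc i)
  | cons i T hi hT ih =>
      have hU : Measurable (fun ω => ∑ k ∈ T, X k ω) := by
        apply Finset.measurable_sum
        exact fun k _ => hX k
      have hindep : IndepFun (fun ω => ∑ k ∈ T, X k ω) (X i) μ := by
        have h := hiid.indepFun_finsetSum_of_notMem hX hi
        have heq : (∑ k ∈ T, X k) = (fun ω => ∑ k ∈ T, X k ω) := by
          ext ω; simp [Finset.sum_apply]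
        rwa [heq] at h
      have hmap : μ.map (fun ω => ((fun ω => ∑ k ∈ T, X k ω) ω, X i ω))
          = (μ.map (fun ω => ∑ k ∈ T, X k ω)).prod (μ.map (X i)) :=
        (indepFun_iff_map_prod_eq_prod_map_map hU.aemeasurable (hX i).aemeasurable).mp hindep
      have hcomp : (fun ω => ∑ k ∈ Finset.cons i T hi, X k ω)
          = (fun p : ℝ × ℝ => p.1 + p.2) ∘ (fun ω => ((fun ω => ∑ k ∈ T, X k ω) ω, X i ω)) := by
        ext ω
        rw [Finset.sum_cons]
        simp [add_comm]
      rw [hcomp, ← Measure.map_map (g := fun p : ℝ × ℝ => p.1 + p.2) (measurable_fst.add measurable_snd)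
        (hU.prodMk (hX i)), hmap, ih, law_eq_cM μ (X i) (hX i) (hc i),
        cM_conv (by exact_mod_cast Nat.cast_pos.mpr (Finset.card_pos.mpr hT)) one_pos]
      congr 1
      rw [Finset.card_cons]
      push_cast
      ring

lemma perS_bound {Ω : Type*} [MeasurableSpace Ω] (μ : Measure Ω) [IsProbabilityMeasure μ]
    {n : ℕ} (hn : 0 < n) (X : Fin n → Ω → ℝ) (hX : ∀ i, Measurable (X i))
    (hiid : iIndepFun X μ)
    (hcauchy : ∀ i, ∀ t : ℝ, (μ {ω | X i ω ≥ t}).toReal = 1 / 2 - arctan t / π)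
    {δ ν t : ℝ} (hδ0 : 0 < δ) (hδ1 : δ < 1) (hν : ν = Real.tan (π * (δ - 1/2)))
    (ht : 0 < t) {j : ℕ} (hj1 : 1 ≤ j) (hjn : j ≤ n - 1)
    (S : Finset (Fin n)) (hS : S.card = j) :
    μ {ω | (1/n : ℝ) * ∑ i, max (X i ω) ν ≥ t ∧
        Finset.univ.filter (fun i => X i ω < ν) = S}
      ≤ ENNReal.ofReal (δ^j * (1/2 - arctan t / π)) := by
  classical
  have hπ := Real.pi_pos
  have harc : arctan ν = π * (δ - 1/2) := by
    rw [hν, Real.arctan_tan]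
    · nlinarith
    · nlinarith
  have h1δ : 1/2 - arctan ν / π = 1 - δ := by
    rw [harc]; field_simp; ring
  have hPt : (0:ℝ) ≤ 1/2 - arctan t / π := by
    have := Real.arctan_lt_pi_div_two t
    rw [sub_nonneg, div_le_iff₀ hπ]
    linarith
  have hmeasge : ∀ i (r : ℝ), μ {ω | X i ω ≥ r} = ENNReal.ofReal (1/2 - arctan r / π) := by
    intro i r
    rw [← ENNReal.ofReal_toReal (measure_ne_top μ _), hcauchy i r]
  have hδset : ∀ i, μ (X i ⁻¹' Iio ν) = ENNReal.ofReal δ := by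
    intro i
    have hcompl : X i ⁻¹' Iio ν = {ω | X i ω ≥ ν}ᶜ := by
      ext ω; simp [not_le]
    have hms : MeasurableSet {ω | X i ω ≥ ν} := hX i measurableSet_Ici
    rw [hcompl, prob_compl_eq_one_sub hms, hmeasge i ν, h1δ,
      ← ENNReal.ofReal_one, ← ENNReal.ofReal_sub _ (by linarith)]
    norm_num
  -- index complement
  set T : Finset (Fin n) := Sᶜ with hTdef
  have hjn' : j < n := lt_of_le_of_lt hjn (Nat.sub_lt hn one_pos)
  have hTcard : T.card = n - j := by
    rw [hTdef, Finset.card_compl, hS, Fintype.card_fin]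
  have hTpos : 0 < T.card := by
    rw [hTcard]; omega
  have hTne : T.Nonempty := Finset.card_pos.mp hTpos
  have hkcast : ((T.card : ℝ)) = (n : ℝ) - (j : ℝ) := by
    rw [hTcard]
    push_cast [Nat.cast_sub hjn'.le]
    ring
  have hkpos : (0:ℝ) < (T.card : ℝ) := by exact_mod_cast hTpos
  set Ev := {ω | (1/n : ℝ) * ∑ i, max (X i ω) ν ≥ t ∧
      Finset.univ.filter (fun i => X i ω < ν) = S} with hEv
  have hmem : ∀ ω ∈ Ev, (∀ i ∈ S, X i ω < ν) ∧ (∀ i ∈ T, ν ≤ X i ω) ∧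
      ((n:ℝ)*t - (j:ℝ)*ν ≤ ∑ i ∈ T, X i ω) := by
    intro ω hω
    obtain ⟨hsum, hfil⟩ := hω
    have hiff : ∀ i, i ∈ S ↔ X i ω < ν := by
      intro i
      rw [← hfil, Finset.mem_filter]
      simp
    have hSlt : ∀ i ∈ S, X i ω < ν := fun i hi => (hiff i).mp hi
    have hTge : ∀ i ∈ T, ν ≤ X i ω := by
      intro i hi
      rw [hTdef, Finset.mem_compl] at hi
      have := (hiff i).not.mp hi
      linarith [not_lt.mp (fun h => this h)]
    refine ⟨hSlt, hTge, ?_⟩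
    have htot : ∑ i, max (X i ω) ν = (j:ℝ)*ν + ∑ i ∈ T, X i ω := by
      rw [← Finset.sum_add_sum_compl S (fun i => max (X i ω) ν), ← hTdef]
      congr 1
      · rw [Finset.sum_congr rfl (fun i hi => max_eq_right (hSlt i hi).le),
          Finset.sum_const, hS, nsmul_eq_mul]
      · exact Finset.sum_congr rfl (fun i hi => max_eq_left (hTge i hi))
    have hnpos : (0:ℝ) < n := by exact_mod_cast hn
    have h2 : t ≤ (1/n : ℝ) * ((j:ℝ)*ν + ∑ i ∈ T, X i ω) := by
      rw [← htot]; exact hsum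
    have h3 : (n:ℝ) * t ≤ (j:ℝ)*ν + ∑ i ∈ T, X i ω := by
      have := mul_le_mul_of_nonneg_left h2 hnpos.le
      calc (n:ℝ) * t ≤ (n:ℝ) * ((1/n : ℝ) * ((j:ℝ)*ν + ∑ i ∈ T, X i ω)) := this
        _ = (j:ℝ)*ν + ∑ i ∈ T, X i ω := by field_simp
    linarith
  rcases le_or_gt ν t with hcase | hcase
  · -- main case: ν ≤ t, use the sum over T
    set s₀ : ℝ := (n:ℝ)*t - (j:ℝ)*ν with hs₀
    have hsub : Ev ⊆ (⋂ i ∈ S, X i ⁻¹' Iio ν) ∩ ((fun ω => ∑ i ∈ T, X i ω) ⁻¹' Ici s₀) := by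
      intro ω hω
      obtain ⟨h1, _, h3⟩ := hmem ω hω
      constructor
      · simp only [Set.mem_iInter]
        intro i hi
        exact h1 i hi
      · exact h3
    have hind := hiid.indepFun_finset S T disjoint_compl_right hX
    set US : Set ((i : S) → ℝ) := {v | ∀ i, v i < ν} with hUS
    set VT : Set ((i : T) → ℝ) := {v | s₀ ≤ ∑ i, v i} with hVT
    have hUSm : MeasurableSet US := by
      have : US = ⋂ i : S, (fun v : (i : S) → ℝ => v i) ⁻¹' Iio ν := by
        ext v; simp [hUS]
      rw [this]
      exact MeasurableSet.iInter (fun i => (measurable_pi_apply i) measurableSet_Iio)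
    have hVTm : MeasurableSet VT := by
      have : VT = (fun v : (i : T) → ℝ => ∑ i, v i) ⁻¹' Ici s₀ := rfl
      rw [this]
      exact (Finset.measurable_sum Finset.univ (fun i _ => measurable_pi_apply i))
        measurableSet_Ici
    have hA : (fun a (i : S) => X i a) ⁻¹' US = ⋂ i ∈ S, X i ⁻¹' Iio ν := by
      ext ω
      simp [hUS, Subtype.forall]
    have hB : (fun a (i : T) => X i a) ⁻¹' VT = (fun ω => ∑ i ∈ T, X i ω) ⁻¹' Ici s₀ := by
      ext ω
      simp only [Set.mem_preimage, Set.mem_setOf_eq, hVT, Set.mem_Ici]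
      rw [Finset.sum_coe_sort T (fun i => X i ω)]
    have hmul := hind.measure_inter_preimage_eq_mul US VT hUSm hVTm
    rw [hA, hB] at hmul
    have hAval : μ (⋂ i ∈ S, X i ⁻¹' Iio ν) = ENNReal.ofReal δ ^ j := by
      rw [hiid.measure_inter_preimage_eq_mul S (sets := fun _ => Iio ν)
        (fun i _ => measurableSet_Iio)]
      rw [Finset.prod_congr rfl (fun i _ => hδset i), Finset.prod_const, hS]
    have hBval : μ ((fun ω => ∑ i ∈ T, X i ω) ⁻¹' Ici s₀)
        = ENNReal.ofReal (1/2 - arctan (s₀ / T.card) / π) := by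
      rw [← Measure.map_apply (Finset.measurable_sum T (fun i _ => hX i)) measurableSet_Ici,
        law_sum_eq_cM μ X hX hiid hcauchy T hTne, cM_Ici hkpos]
    have harcle : arctan t ≤ arctan (s₀ / T.card) := by
      apply Real.arctan_strictMono.monotone
      rw [le_div_iff₀ hkpos, hkcast, hs₀]
      have hj0 : (0:ℝ) ≤ (j:ℝ) := Nat.cast_nonneg j
      nlinarith
    calc μ Ev ≤ μ ((⋂ i ∈ S, X i ⁻¹' Iio ν) ∩ ((fun ω => ∑ i ∈ T, X i ω) ⁻¹' Ici s₀)) :=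
          measure_mono hsub
      _ = ENNReal.ofReal δ ^ j * ENNReal.ofReal (1/2 - arctan (s₀ / T.card) / π) := by
          rw [hmul, hAval, hBval]
      _ ≤ ENNReal.ofReal δ ^ j * ENNReal.ofReal (1/2 - arctan t / π) := by
          apply mul_le_mul_right
          apply ENNReal.ofReal_le_ofReal
          have h5 : arctan t / π ≤ arctan (s₀ / T.card) / π := by gcongr
          linarith
      _ = ENNReal.ofReal (δ^j * (1/2 - arctan t / π)) := by
          rw [← ENNReal.ofReal_pow hδ0.le, ← ENNReal.ofReal_mul (by positivity)]
  · -- easy case: t < ν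
    obtain ⟨i₀, hi₀⟩ := hTne
    have hi₀S : i₀ ∉ S := Finset.mem_compl.mp hi₀
    set sets : Fin n → Set ℝ := fun i => if i = i₀ then Ici ν else Iio ν with hsets
    have hsub : Ev ⊆ ⋂ i ∈ insert i₀ S, X i ⁻¹' sets i := by
      intro ω hω
      obtain ⟨h1, h2, _⟩ := hmem ω hω
      simp only [Set.mem_iInter]
      intro i hi
      rcases Finset.mem_insert.mp hi with h | h
      · rw [h]
        simp only [hsets, if_pos rfl, Set.mem_preimage, Set.mem_Ici]
        exact h2 i₀ hi₀
      · have hne : i ≠ i₀ := fun he => hi₀S (he ▸ h)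
        simp only [hsets, if_neg hne, Set.mem_preimage, Set.mem_Iio]
        exact h1 i h
    have hval : μ (⋂ i ∈ insert i₀ S, X i ⁻¹' sets i)
        = ENNReal.ofReal (1 - δ) * ENNReal.ofReal δ ^ j := by
      rw [hiid.measure_inter_preimage_eq_mul (insert i₀ S) (sets := sets)
        (fun i _ => by
          by_cases h : i = i₀
          · simp only [hsets, h, if_pos rfl]
            exact measurableSet_Ici
          · simp only [hsets, if_neg h]
            exact measurableSet_Iio)]
      rw [Finset.prod_insert hi₀S]
      congr 1
      · rw [show sets i₀ = Ici ν by simp [hsets]]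
        have hpre : X i₀ ⁻¹' Ici ν = {ω | X i₀ ω ≥ ν} := rfl
        rw [hpre, hmeasge i₀ ν, h1δ]
      · calc ∏ i ∈ S, μ (X i ⁻¹' sets i) = ∏ i ∈ S, ENNReal.ofReal δ := by
              apply Finset.prod_congr rfl
              intro i hi
              have hne : i ≠ i₀ := fun he => hi₀S (he ▸ hi)
              rw [show sets i = Iio ν by simp [hsets, hne]]
              exact hδset i
          _ = ENNReal.ofReal δ ^ j := by rw [Finset.prod_const, hS]
    have hle1δ : ENNReal.ofReal (1 - δ) ≤ ENNReal.ofReal (1/2 - arctan t / π) := by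
      apply ENNReal.ofReal_le_ofReal
      rw [← h1δ]
      have harcle : arctan t ≤ arctan ν := Real.arctan_strictMono.monotone hcase.le
      have h5 : arctan t / π ≤ arctan ν / π := by gcongr
      linarith
    calc μ Ev ≤ μ (⋂ i ∈ insert i₀ S, X i ⁻¹' sets i) := measure_mono hsub
      _ = ENNReal.ofReal (1 - δ) * ENNReal.ofReal δ ^ j := hval
      _ ≤ ENNReal.ofReal (1/2 - arctan t / π) * ENNReal.ofReal δ ^ j :=
          mul_le_mul_left hle1δ _
      _ = ENNReal.ofReal (δ^j * (1/2 - arctan t / π)) := by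
          rw [← ENNReal.ofReal_pow hδ0.le, ← ENNReal.ofReal_mul (by linarith [hPt])]
          congr 1
          ring


end CauchyAux

theorem truncated_cauchy_partial_bound {Ω : Type*} [MeasurableSpace Ω]
    (μ : Measure Ω) [IsProbabilityMeasure μ]
    (n : ℕ) (hn : 0 < n)
    (X : Fin n → Ω → ℝ) (hX : ∀ i, Measurable (X i))
    (hiid : iIndepFun X μ)
    (hcauchy : ∀ i, ∀ t : ℝ,
      (μ {ω | X i ω ≥ t}).toReal = 1 / 2 - Real.arctan t / Real.pi)
    (δ : ℝ) (hδ0 : 0 < δ) (hδ1 : δ < 1)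
    (ν : ℝ) (hν : ν = Real.tan (Real.pi * (δ - 1 / 2)))
    (t : ℝ) (ht : 0 < t)
    (j : ℕ) (hj1 : 1 ≤ j) (hjn : j ≤ n - 1) :
    (μ {ω | (1 / n : ℝ) * ∑ i, max (X i ω) ν ≥ t ∧
        (Finset.univ.filter (fun i => X i ω < ν)).card = j}).toReal ≤
      (n.choose j : ℝ) * δ ^ j * (μ {ω | X ⟨0, hn⟩ ω ≥ t}).toReal := by
  classical
  have hπ := Real.pi_pos
  have hPt : (0:ℝ) ≤ 1/2 - Real.arctan t / Real.pi := by
    have := Real.arctan_lt_pi_div_two t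
    rw [sub_nonneg, div_le_iff₀ hπ]
    linarith
  have hP : (μ {ω | X ⟨0, hn⟩ ω ≥ t}).toReal = 1/2 - Real.arctan t / Real.pi := hcauchy _ t
  have hsub : {ω | (1 / n : ℝ) * ∑ i, max (X i ω) ν ≥ t ∧
        (Finset.univ.filter (fun i => X i ω < ν)).card = j}
      ⊆ ⋃ S ∈ Finset.powersetCard j (Finset.univ : Finset (Fin n)),
        {ω | (1 / n : ℝ) * ∑ i, max (X i ω) ν ≥ t ∧
          Finset.univ.filter (fun i => X i ω < ν) = S} := by
    intro ω hω
    obtain ⟨h1, h2⟩ := hω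
    simp only [Set.mem_iUnion]
    exact ⟨_, Finset.mem_powersetCard.mpr ⟨Finset.subset_univ _, h2⟩, ⟨h1, rfl⟩⟩
  have hle : μ {ω | (1 / n : ℝ) * ∑ i, max (X i ω) ν ≥ t ∧
        (Finset.univ.filter (fun i => X i ω < ν)).card = j}
      ≤ (n.choose j : ENNReal) * ENNReal.ofReal (δ^j * (1/2 - Real.arctan t / Real.pi)) := by
    calc μ _ ≤ μ (⋃ S ∈ Finset.powersetCard j (Finset.univ : Finset (Fin n)),
          {ω | (1 / n : ℝ) * ∑ i, max (X i ω) ν ≥ t ∧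
            Finset.univ.filter (fun i => X i ω < ν) = S}) := measure_mono hsub
      _ ≤ ∑ S ∈ Finset.powersetCard j (Finset.univ : Finset (Fin n)),
          μ {ω | (1 / n : ℝ) * ∑ i, max (X i ω) ν ≥ t ∧
            Finset.univ.filter (fun i => X i ω < ν) = S} := measure_biUnion_finset_le _ _
      _ ≤ ∑ S ∈ Finset.powersetCard j (Finset.univ : Finset (Fin n)),
          ENNReal.ofReal (δ^j * (1/2 - Real.arctan t / Real.pi)) := by
          apply Finset.sum_le_sum
          intro S hS
          exact perS_bound μ hn X hX hiid hcauchy hδ0 hδ1 hν ht hj1 hjn S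
            (Finset.mem_powersetCard.mp hS).2
      _ = (n.choose j : ENNReal) * ENNReal.ofReal (δ^j * (1/2 - Real.arctan t / Real.pi)) := by
          rw [Finset.sum_const, Finset.card_powersetCard, Finset.card_univ, Fintype.card_fin,
            nsmul_eq_mul]
  have hle2 : μ {ω | (1 / n : ℝ) * ∑ i, max (X i ω) ν ≥ t ∧
        (Finset.univ.filter (fun i => X i ω < ν)).card = j}
      ≤ ENNReal.ofReal ((n.choose j : ℝ) * (δ^j * (1/2 - Real.arctan t / Real.pi))) := by
    rw [ENNReal.ofReal_mul (Nat.cast_nonneg _), ENNReal.ofReal_natCast]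
    exact hle
  have := ENNReal.toReal_le_of_le_ofReal (by positivity) hle2
  rw [hP]
  calc (μ _).toReal ≤ (n.choose j : ℝ) * (δ^j * (1/2 - Real.arctan t / Real.pi)) := this
    _ = (n.choose j : ℝ) * δ^j * (1/2 - Real.arctan t / Real.pi) := by ring
end

section
/- Let U₁,…,Uₙ be nonnegative random variables, each with regularly varying survival function, that are pairwise asymptotically tail independent, with CDFs F₁,…,Fₙ. Then for n = 2: P(U₁ + U₂ > t) ∼ F̄₁(t) + F̄₂(t) as t → ∞, i.e. lim_{t→∞} P(U₁+U₂ > t)/(F̄₁(t)+F̄₂(t)) = 1. -/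
open MeasureTheory Filter Set

private lemma div_add_div_le_max {a b c d : ℝ} (ha : 0 ≤ a) (hb : 0 ≤ b)
    (hc : 0 < c) (hd : 0 < d) : (a + b) / (c + d) ≤ max (a / c) (b / d) := by
  rw [div_le_iff₀ (by positivity)]
  have h1 : a ≤ max (a / c) (b / d) * c := by
    calc a = a / c * c := (div_mul_cancel₀ a hc.ne').symm
    _ ≤ _ := mul_le_mul_of_nonneg_right (le_max_left _ _) hc.le
  have h2 : b ≤ max (a / c) (b / d) * d := by
    calc b = b / d * d := (div_mul_cancel₀ b hd.ne').symm
    _ ≤ _ := mul_le_mul_of_nonneg_right (le_max_right _ _) hd.le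
  rw [mul_add]; linarith

private lemma aux_tendsto (F₁ F₂ B G : ℝ → ℝ) (γ₁ γ₂ : ℝ)
    (hF₁0 : ∀ t, 0 ≤ F₁ t) (hF₂0 : ∀ t, 0 ≤ F₂ t) (hB0 : ∀ t, 0 ≤ B t)
    (hRV₁ : ∀ y : ℝ, 0 < y → Tendsto (fun x => F₁ (x * y) / F₁ x) atTop (nhds (y ^ (-γ₁))))
    (hRV₂ : ∀ y : ℝ, 0 < y → Tendsto (fun x => F₂ (x * y) / F₂ x) atTop (nhds (y ^ (-γ₂))))
    (hind : Tendsto (fun t => B t / (F₁ t + F₂ t)) atTop (nhds 0))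
    (hlow : ∀ t, F₁ t + F₂ t - B t ≤ G t)
    (hup : ∀ δ : ℝ, δ ∈ Ioo (0:ℝ) 1 → ∀ t,
      G t ≤ F₁ (t * (1 - δ)) + F₂ (t * (1 - δ)) + B (t * δ)) :
    Tendsto (fun t => G t / (F₁ t + F₂ t)) atTop (nhds 1) := by
  -- eventual positivity of F₁, F₂
  have hpos₁ : ∀ᶠ x in atTop, 0 < F₁ x := by
    have h2 : (0:ℝ) < (2:ℝ) ^ (-γ₁) := Real.rpow_pos_of_pos two_pos _
    filter_upwards [(hRV₁ 2 two_pos).eventually (eventually_gt_nhds h2)] with x hx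
    rcases (hF₁0 x).lt_or_eq with h | h
    · exact h
    · rw [← h, div_zero] at hx; exact absurd hx (lt_irrefl 0)
  have hpos₂ : ∀ᶠ x in atTop, 0 < F₂ x := by
    have h2 : (0:ℝ) < (2:ℝ) ^ (-γ₂) := Real.rpow_pos_of_pos two_pos _
    filter_upwards [(hRV₂ 2 two_pos).eventually (eventually_gt_nhds h2)] with x hx
    rcases (hF₂0 x).lt_or_eq with h | h
    · exact h
    · rw [← h, div_zero] at hx; exact absurd hx (lt_irrefl 0)
  have hlowev : ∀ᶠ t in atTop,
      1 - B t / (F₁ t + F₂ t) ≤ G t / (F₁ t + F₂ t) := by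
    filter_upwards [hpos₁, hpos₂] with t h1 h2
    have hS : 0 < F₁ t + F₂ t := add_pos h1 h2
    have : (F₁ t + F₂ t - B t) / (F₁ t + F₂ t) ≤ G t / (F₁ t + F₂ t) :=
      (div_le_div_iff_of_pos_right hS).mpr (hlow t)
    calc 1 - B t / (F₁ t + F₂ t) = (F₁ t + F₂ t - B t) / (F₁ t + F₂ t) := by
          rw [sub_div, div_self hS.ne']
      _ ≤ _ := this
  rw [Metric.tendsto_nhds]
  intro ε hε
  -- choose δ
  have hcont : Tendsto (fun δ : ℝ => max ((1-δ) ^ (-γ₁)) ((1-δ) ^ (-γ₂)))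
      (nhds 0) (nhds 1) := by
    have hbase : Tendsto (fun δ : ℝ => (1:ℝ) - δ) (nhds 0) (nhds 1) := by
      have : Tendsto (fun δ : ℝ => (1:ℝ) - δ) (nhds 0) (nhds ((1:ℝ) - 0)) :=
        tendsto_const_nhds.sub tendsto_id
      simpa using this
    have c₁ : Tendsto (fun δ : ℝ => (1-δ) ^ (-γ₁)) (nhds 0) (nhds 1) := by
      have := (Real.continuousAt_rpow_const 1 (-γ₁) (Or.inl one_ne_zero)).tendsto.comp hbase
      simpa [Real.one_rpow, Function.comp_def] using this
    have c₂ : Tendsto (fun δ : ℝ => (1-δ) ^ (-γ₂)) (nhds 0) (nhds 1) := by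
      have := (Real.continuousAt_rpow_const 1 (-γ₂) (Or.inl one_ne_zero)).tendsto.comp hbase
      simpa [Real.one_rpow, Function.comp_def] using this
    simpa using c₁.max c₂
  have hev : ∀ᶠ δ in nhds (0:ℝ),
      max ((1-δ) ^ (-γ₁)) ((1-δ) ^ (-γ₂)) < 1 + ε/2 ∧ δ < 1 :=
    (hcont.eventually (eventually_lt_nhds (by linarith))).and (eventually_lt_nhds one_pos)
  obtain ⟨δ, ⟨hδmax, hδ1⟩, hδpos⟩ :=
    ((hev.filter_mono nhdsWithin_le_nhds).and self_mem_nhdsWithin).exists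
      (f := nhdsWithin (0:ℝ) (Ioi 0))
  have hδIoo : δ ∈ Ioo (0:ℝ) 1 := ⟨hδpos, hδ1⟩
  have hmulδ : Tendsto (fun t : ℝ => t * δ) atTop atTop :=
    Tendsto.atTop_mul_const hδpos tendsto_id
  have hBδ : Tendsto (fun t => B (t*δ) / (F₁ (t*δ) + F₂ (t*δ))) atTop (nhds 0) :=
    hind.comp hmulδ
  have hr₁ := hRV₁ (1-δ) (by linarith)
  have hr₂ := hRV₂ (1-δ) (by linarith)
  have hs₁ := hRV₁ δ hδpos
  have hs₂ := hRV₂ δ hδpos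
  have hupperlim : Tendsto (fun t => max (F₁ (t*(1-δ))/F₁ t) (F₂ (t*(1-δ))/F₂ t)
      + B (t*δ)/(F₁ (t*δ)+F₂ (t*δ)) * (F₁ (t*δ)/F₁ t + F₂ (t*δ)/F₂ t)) atTop
      (nhds (max ((1-δ)^(-γ₁)) ((1-δ)^(-γ₂)) + 0 * (δ^(-γ₁) + δ^(-γ₂)))) :=
    (hr₁.max hr₂).add (hBδ.mul (hs₁.add hs₂))
  have hlt : ∀ᶠ t in atTop, max (F₁ (t*(1-δ))/F₁ t) (F₂ (t*(1-δ))/F₂ t)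
      + B (t*δ)/(F₁ (t*δ)+F₂ (t*δ)) * (F₁ (t*δ)/F₁ t + F₂ (t*δ)/F₂ t) < 1 + ε/2 :=
    hupperlim.eventually (eventually_lt_nhds (by rw [zero_mul, add_zero]; exact hδmax))
  have hupev : ∀ᶠ t in atTop, G t / (F₁ t + F₂ t) ≤
      max (F₁ (t*(1-δ))/F₁ t) (F₂ (t*(1-δ))/F₂ t)
      + B (t*δ)/(F₁ (t*δ)+F₂ (t*δ)) * (F₁ (t*δ)/F₁ t + F₂ (t*δ)/F₂ t) := by
    filter_upwards [hpos₁, hpos₂, hmulδ.eventually hpos₁, hmulδ.eventually hpos₂]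
      with t h1 h2 h1' h2'
    have hS : 0 < F₁ t + F₂ t := add_pos h1 h2
    have hS' : 0 < F₁ (t*δ) + F₂ (t*δ) := add_pos h1' h2'
    calc G t / (F₁ t + F₂ t)
        ≤ (F₁ (t*(1-δ)) + F₂ (t*(1-δ)) + B (t*δ)) / (F₁ t + F₂ t) :=
          (div_le_div_iff_of_pos_right hS).mpr (hup δ hδIoo t)
      _ = (F₁ (t*(1-δ)) + F₂ (t*(1-δ))) / (F₁ t + F₂ t)
            + B (t*δ) / (F₁ t + F₂ t) := add_div _ _ _
      _ ≤ max (F₁ (t*(1-δ))/F₁ t) (F₂ (t*(1-δ))/F₂ t)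
            + B (t*δ)/(F₁ (t*δ)+F₂ (t*δ)) * (F₁ (t*δ)/F₁ t + F₂ (t*δ)/F₂ t) := by
          apply add_le_add
          · exact div_add_div_le_max (hF₁0 _) (hF₂0 _) h1 h2
          · have heq : B (t*δ) / (F₁ t + F₂ t)
                = B (t*δ)/(F₁ (t*δ)+F₂ (t*δ)) * ((F₁ (t*δ)+F₂ (t*δ)) / (F₁ t + F₂ t)) := by
              field_simp
            rw [heq]
            apply mul_le_mul_of_nonneg_left _ (div_nonneg (hB0 _) hS'.le)
            calc (F₁ (t*δ)+F₂ (t*δ)) / (F₁ t + F₂ t)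
                = F₁ (t*δ)/(F₁ t+F₂ t) + F₂ (t*δ)/(F₁ t+F₂ t) := add_div _ _ _
              _ ≤ F₁ (t*δ)/F₁ t + F₂ (t*δ)/F₂ t := by
                  apply add_le_add
                  · apply div_le_div_of_nonneg_left (hF₁0 _) h1
                    linarith
                  · apply div_le_div_of_nonneg_left (hF₂0 _) h2
                    linarith
  have hsmall : ∀ᶠ t in atTop, B t / (F₁ t + F₂ t) < ε :=
    hind.eventually (eventually_lt_nhds hε)
  filter_upwards [hlowev, hupev, hlt, hsmall] with t hA hB' hC hD
  rw [Real.dist_eq, abs_lt]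
  constructor <;> [linarith; linarith]

theorem sum_tail_asymptotic_two {Ω : Type*} [MeasurableSpace Ω]
    (μ : Measure Ω) [IsProbabilityMeasure μ]
    (U₁ U₂ : Ω → ℝ) (hU₁ : Measurable U₁) (hU₂ : Measurable U₂)
    (hU₁nonneg : ∀ ω, 0 ≤ U₁ ω) (hU₂nonneg : ∀ ω, 0 ≤ U₂ ω)
    (γ₁ γ₂ : ℝ) (hγ₁ : 0 < γ₁) (hγ₂ : 0 < γ₂)
    (hRV₁ : ∀ y : ℝ, 0 < y → Tendsto (fun x : ℝ =>
      (μ {ω | U₁ ω > x * y}).toReal / (μ {ω | U₁ ω > x}).toReal) atTop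
      (nhds (y ^ (-γ₁))))
    (hRV₂ : ∀ y : ℝ, 0 < y → Tendsto (fun x : ℝ =>
      (μ {ω | U₂ ω > x * y}).toReal / (μ {ω | U₂ ω > x}).toReal) atTop
      (nhds (y ^ (-γ₂))))
    (htailindep : Tendsto (fun t : ℝ =>
      (μ {ω | U₁ ω > t ∧ U₂ ω > t}).toReal /
        ((μ {ω | U₁ ω > t}).toReal + (μ {ω | U₂ ω > t}).toReal)) atTop (nhds 0)) :
    Tendsto (fun t : ℝ =>
      (μ {ω | U₁ ω + U₂ ω > t}).toReal /
        ((μ {ω | U₁ ω > t}).toReal + (μ {ω | U₂ ω > t}).toReal)) atTop (nhds 1) := by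
  have hm₂ : ∀ s : ℝ, MeasurableSet {ω | U₂ ω > s} := fun s => hU₂ measurableSet_Ioi
  have hinter : ∀ s : ℝ, {ω | U₁ ω > s ∧ U₂ ω > s} = {ω | U₁ ω > s} ∩ {ω | U₂ ω > s} :=
    fun s => Set.setOf_and
  apply aux_tendsto (fun t => (μ {ω | U₁ ω > t}).toReal)
    (fun t => (μ {ω | U₂ ω > t}).toReal)
    (fun t => (μ {ω | U₁ ω > t ∧ U₂ ω > t}).toReal)
    (fun t => (μ {ω | U₁ ω + U₂ ω > t}).toReal) γ₁ γ₂
    (fun t => ENNReal.toReal_nonneg) (fun t => ENNReal.toReal_nonneg)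
    (fun t => ENNReal.toReal_nonneg) hRV₁ hRV₂ htailindep
  · -- hlow
    intro t
    have hsub : {ω | U₁ ω > t} ∪ {ω | U₂ ω > t} ⊆ {ω | U₁ ω + U₂ ω > t} := by
      rintro ω (h | h) <;> simp only [mem_setOf_eq] at *
      · linarith [hU₂nonneg ω]
      · linarith [hU₁nonneg ω]
    have key : μ ({ω | U₁ ω > t} ∪ {ω | U₂ ω > t}) + μ ({ω | U₁ ω > t} ∩ {ω | U₂ ω > t})
        = μ {ω | U₁ ω > t} + μ {ω | U₂ ω > t} := measure_union_add_inter _ (hm₂ t)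
    have key' := congrArg ENNReal.toReal key
    rw [ENNReal.toReal_add (measure_ne_top μ _) (measure_ne_top μ _),
      ENNReal.toReal_add (measure_ne_top μ _) (measure_ne_top μ _)] at key'
    have hmono : (μ ({ω | U₁ ω > t} ∪ {ω | U₂ ω > t})).toReal
        ≤ (μ {ω | U₁ ω + U₂ ω > t}).toReal :=
      ENNReal.toReal_mono (measure_ne_top μ _) (measure_mono hsub)
    rw [hinter t]
    linarith
  · -- hup
    intro δ hδ t
    have hsub : {ω | U₁ ω + U₂ ω > t} ⊆
        {ω | U₁ ω > t * (1 - δ)} ∪ {ω | U₂ ω > t * (1 - δ)}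
          ∪ ({ω | U₁ ω > t * δ} ∩ {ω | U₂ ω > t * δ}) := by
      intro ω h
      simp only [mem_setOf_eq] at h
      by_cases hc₁ : U₁ ω > t * (1 - δ)
      · exact Or.inl (Or.inl hc₁)
      · by_cases hc₂ : U₂ ω > t * (1 - δ)
        · exact Or.inl (Or.inr hc₂)
        · push_neg at hc₁ hc₂
          have hid : t * (1 - δ) = t - t * δ := by ring
          refine Or.inr ⟨?_, ?_⟩ <;> simp only [mem_setOf_eq] <;> linarith
    have h3 : μ ({ω | U₁ ω > t * (1 - δ)} ∪ {ω | U₂ ω > t * (1 - δ)}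
          ∪ ({ω | U₁ ω > t * δ} ∩ {ω | U₂ ω > t * δ}))
        ≤ μ {ω | U₁ ω > t * (1 - δ)} + μ {ω | U₂ ω > t * (1 - δ)}
          + μ ({ω | U₁ ω > t * δ} ∩ {ω | U₂ ω > t * δ}) :=
      (measure_union_le _ _).trans (add_le_add (measure_union_le _ _) le_rfl)
    have hfin : μ {ω | U₁ ω > t * (1 - δ)} + μ {ω | U₂ ω > t * (1 - δ)}
          + μ ({ω | U₁ ω > t * δ} ∩ {ω | U₂ ω > t * δ}) ≠ ⊤ :=
      ENNReal.add_ne_top.mpr ⟨ENNReal.add_ne_top.mpr ⟨measure_ne_top μ _, measure_ne_top μ _⟩,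
        measure_ne_top μ _⟩
    calc (μ {ω | U₁ ω + U₂ ω > t}).toReal
        ≤ (μ {ω | U₁ ω > t * (1 - δ)} + μ {ω | U₂ ω > t * (1 - δ)}
            + μ ({ω | U₁ ω > t * δ} ∩ {ω | U₂ ω > t * δ})).toReal :=
          ENNReal.toReal_mono hfin ((measure_mono hsub).trans h3)
      _ = (μ {ω | U₁ ω > t * (1 - δ)}).toReal + (μ {ω | U₂ ω > t * (1 - δ)}).toReal
            + (μ {ω | U₁ ω > t * δ ∧ U₂ ω > t * δ}).toReal := by
          rw [ENNReal.toReal_add (ENNReal.add_ne_top.mpr ⟨measure_ne_top μ _, measure_ne_top μ _⟩)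
            (measure_ne_top μ _),
            ENNReal.toReal_add (measure_ne_top μ _) (measure_ne_top μ _), hinter (t * δ)]
end
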